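/- Let G = (V,E), and for each edge let ρ_{st} ∈ (0,1]. Given strictly positive messages M_{ts} : X_s → ℝ_{>0}, define for each spanning tree T in the support of ρ the function θ(T)(x) = ∑_{s∈V} log ν_s(x_s) + ∑_{(s,t)∈E(T)} log(ν_{st}(x_s,x_t)/(ν_s(x_s)ν_t(x_t))), where ν_s(x_s) ∝ exp(θ̄_s(x_s)) ∏_{v∈Γ(s)} M_{vs}(x_s)^{ρ_{vs}} and ν_{st}(x_s,x_t) ∝ exp(θ̄_{st}(x_s,x_t)/ρ_{st} + θ̄_s(x_s) + θ̄_t(x_t)) · [∏_{v∈Γ(s)∖t} M_{vs}(x_s)^{ρ_{vs}} / M_{ts}(x_s)^{1−ρ_{ts}}] · [∏_{v∈Γ(t)∖s} M_{vt}(x_t)^{ρ_{vt}} / M_{st}(x_t)^{1−ρ_{st}}]. If ρ_{st} equals the probability that edge (s,t) appears in a tree drawn from ρ, then for all x, ∑_T ρ(T) θ(T)(x) = ∑_s θ̄_s(x_s) + ∑_{(s,t)∈E} θ̄_{st}(x_s,x_t) + C for a constant C independent of x. -/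

import Mathlib

/-- The single-node pseudo-max-marginal defined (up to the positive constant `c1 s`)
by the messages: `ν_s(x_s) ∝ exp(θ̄_s(x_s)) ∏_{v ∈ Γ(s)} M_{vs}(x_s)^{ρ_{vs}}`,
where the neighborhood `Γ(s)` is read off from the oriented edge set `E`. -/
noncomputable def nu1 {V : Type*} [Fintype V] [DecidableEq V] {X : V → Type*}
    (E : Finset (V × V)) (θN : (s : V) → X s → ℝ) (ρw : V → V → ℝ)
    (M : (v s : V) → X s → ℝ) (c1 : V → ℝ) (s : V) (a : X s) : ℝ :=
  c1 s * Real.exp (θN s a) *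
    ∏ v ∈ Finset.univ.filter (fun u => (s, u) ∈ E ∨ (u, s) ∈ E),
      (M v s a) ^ (ρw v s)

/-- The pairwise pseudo-max-marginal defined (up to the positive constant `c2 s t`)
by the messages:
`ν_{st}(x_s,x_t) ∝ exp(θ̄_{st}/ρ_{st} + θ̄_s + θ̄_t) ·
  [∏_{v ∈ Γ(s)∖t} M_{vs}^{ρ_{vs}} / M_{ts}^{1−ρ_{ts}}] ·
  [∏_{v ∈ Γ(t)∖s} M_{vt}^{ρ_{vt}} / M_{st}^{1−ρ_{st}}]`. -/
noncomputable def nu2 {V : Type*} [Fintype V] [DecidableEq V] {X : V → Type*}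
    (E : Finset (V × V)) (θN : (s : V) → X s → ℝ)
    (θE : (s t : V) → X s → X t → ℝ) (ρw : V → V → ℝ)
    (M : (v s : V) → X s → ℝ) (c2 : V → V → ℝ)
    (s t : V) (a : X s) (b : X t) : ℝ :=
  c2 s t * Real.exp (θE s t a b / ρw s t + θN s a + θN t b) *
    ((∏ v ∈ (Finset.univ.filter fun u => (s, u) ∈ E ∨ (u, s) ∈ E).erase t,
        (M v s a) ^ (ρw v s)) / (M t s a) ^ (1 - ρw t s)) *
    ((∏ v ∈ (Finset.univ.filter fun u => (t, u) ∈ E ∨ (u, t) ∈ E).erase s,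
        (M v t b) ^ (ρw v t)) / (M s t b) ^ (1 - ρw s t))

/-- The tree-structured exponential parameter determined by the pseudo-max-marginals
via the max-marginal factorization:
`θ(T)(x) = ∑_s log ν_s(x_s) + ∑_{(s,t) ∈ E(T)} log (ν_{st}(x_s,x_t)/(ν_s(x_s) ν_t(x_t)))`. -/
noncomputable def thetaTree {V : Type*} [Fintype V] [DecidableEq V] {X : V → Type*}
    (E : Finset (V × V)) (θN : (s : V) → X s → ℝ)
    (θE : (s t : V) → X s → X t → ℝ) (ρw : V → V → ℝ)
    (M : (v s : V) → X s → ℝ) (c1 : V → ℝ) (c2 : V → V → ℝ)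
    (Ted : Finset (V × V)) (x : (v : V) → X v) : ℝ :=
  (∑ s, Real.log (nu1 E θN ρw M c1 s (x s))) +
    ∑ p ∈ Ted, Real.log (nu2 E θN θE ρw M c2 p.1 p.2 (x p.1) (x p.2) /
      (nu1 E θN ρw M c1 p.1 (x p.1) * nu1 E θN ρw M c1 p.2 (x p.2)))


section Helpers

lemma pair_sum {V : Type*} [Fintype V] [DecidableEq V] (E : Finset (V × V))
    (hE_orient : ∀ p ∈ E, (p.2, p.1) ∉ E) (f : V → V → ℝ) :
    ∑ s, ∑ v ∈ Finset.univ.filter (fun u => (s, u) ∈ E ∨ (u, s) ∈ E), f v s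
      = ∑ p ∈ E, (f p.2 p.1 + f p.1 p.2) := by
  have key : ∀ s v : V, (if (s, v) ∈ E ∨ (v, s) ∈ E then f v s else 0)
      = (if (s, v) ∈ E then f v s else 0) + (if (v, s) ∈ E then f v s else 0) := by
    intro s v
    by_cases h1 : (s, v) ∈ E
    · have h2 : (v, s) ∉ E := hE_orient (s, v) h1
      simp [h1, h2]
    · by_cases h2 : (v, s) ∈ E <;> simp [h1, h2]
  calc ∑ s, ∑ v ∈ Finset.univ.filter (fun u => (s, u) ∈ E ∨ (u, s) ∈ E), f v s
      = ∑ s, ∑ v : V, ((if (s, v) ∈ E then f v s else 0) + (if (v, s) ∈ E then f v s else 0)) := by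
        simp_rw [Finset.sum_filter, key]
    _ = (∑ s, ∑ v, (if (s, v) ∈ E then f v s else 0))
        + ∑ v, ∑ s, (if (v, s) ∈ E then f v s else 0) := by
        simp_rw [Finset.sum_add_distrib]
        congr 1
        exact Finset.sum_comm
    _ = (∑ p ∈ Finset.univ ×ˢ Finset.univ, (if p ∈ E then f p.2 p.1 else 0))
        + ∑ p ∈ Finset.univ ×ˢ Finset.univ, (if p ∈ E then f p.1 p.2 else 0) := by
        rw [Finset.sum_product, Finset.sum_product]
    _ = ∑ p ∈ E, (f p.2 p.1 + f p.1 p.2) := by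
        rw [Finset.sum_ite_mem, Finset.sum_ite_mem]
        simp [Finset.univ_product_univ, Finset.sum_add_distrib]

variable {V : Type*} [Fintype V] [DecidableEq V] {X : V → Type*}
    (E : Finset (V × V)) (θN : (s : V) → X s → ℝ)
    (θE : (s t : V) → X s → X t → ℝ) (ρw : V → V → ℝ)
    (M : (v s : V) → X s → ℝ) (c1 : V → ℝ) (c2 : V → V → ℝ)

lemma nu1_pos (hM : ∀ (v s : V) (a : X s), 0 < M v s a) (hc1 : ∀ s, 0 < c1 s)
    (s : V) (a : X s) : 0 < nu1 E θN ρw M c1 s a := by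
  unfold nu1
  have : 0 < ∏ v ∈ Finset.univ.filter (fun u => (s, u) ∈ E ∨ (u, s) ∈ E),
      (M v s a) ^ (ρw v s) :=
    Finset.prod_pos fun v _ => Real.rpow_pos_of_pos (hM v s a) _
  exact mul_pos (mul_pos (hc1 s) (Real.exp_pos _)) this

lemma nu2_pos (hM : ∀ (v s : V) (a : X s), 0 < M v s a) (hc2 : ∀ s t, 0 < c2 s t)
    (s t : V) (a : X s) (b : X t) : 0 < nu2 E θN θE ρw M c2 s t a b := by
  unfold nu2
  have hps : (0:ℝ) < ∏ v ∈ (Finset.univ.filter fun u => (s, u) ∈ E ∨ (u, s) ∈ E).erase t,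
      (M v s a) ^ (ρw v s) := Finset.prod_pos fun v _ => Real.rpow_pos_of_pos (hM v s a) _
  have hpt : (0:ℝ) < ∏ v ∈ (Finset.univ.filter fun u => (t, u) ∈ E ∨ (u, t) ∈ E).erase s,
      (M v t b) ^ (ρw v t) := Finset.prod_pos fun v _ => Real.rpow_pos_of_pos (hM v t b) _
  have hqs : (0:ℝ) < (M t s a) ^ (1 - ρw t s) := Real.rpow_pos_of_pos (hM t s a) _
  have hqt : (0:ℝ) < (M s t b) ^ (1 - ρw s t) := Real.rpow_pos_of_pos (hM s t b) _
  exact mul_pos (mul_pos (mul_pos (hc2 s t) (Real.exp_pos _)) (div_pos hps hqs))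
    (div_pos hpt hqt)

lemma log_nu1 (hM : ∀ (v s : V) (a : X s), 0 < M v s a) (hc1 : ∀ s, 0 < c1 s)
    (s : V) (a : X s) :
    Real.log (nu1 E θN ρw M c1 s a) = Real.log (c1 s) + θN s a +
      ∑ v ∈ Finset.univ.filter (fun u => (s, u) ∈ E ∨ (u, s) ∈ E),
        ρw v s * Real.log (M v s a) := by
  unfold nu1
  rw [Real.log_mul (mul_pos (hc1 s) (Real.exp_pos _)).ne', Real.log_mul (hc1 s).ne'
    (Real.exp_ne_zero _), Real.log_exp, Real.log_prod]
  · congr 1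
    exact Finset.sum_congr rfl fun v _ => Real.log_rpow (hM v s a) _
  · exact fun v _ => (Real.rpow_pos_of_pos (hM v s a) _).ne'
  · exact (Finset.prod_pos fun v _ => Real.rpow_pos_of_pos (hM v s a) _).ne'

lemma log_nu2 (hM : ∀ (v s : V) (a : X s), 0 < M v s a) (hc2 : ∀ s t, 0 < c2 s t)
    (s t : V) (a : X s) (b : X t) :
    Real.log (nu2 E θN θE ρw M c2 s t a b) = Real.log (c2 s t) +
      (θE s t a b / ρw s t + θN s a + θN t b) +
      ((∑ v ∈ (Finset.univ.filter fun u => (s, u) ∈ E ∨ (u, s) ∈ E).erase t,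
          ρw v s * Real.log (M v s a)) - (1 - ρw t s) * Real.log (M t s a)) +
      ((∑ v ∈ (Finset.univ.filter fun u => (t, u) ∈ E ∨ (u, t) ∈ E).erase s,
          ρw v t * Real.log (M v t b)) - (1 - ρw s t) * Real.log (M s t b)) := by
  unfold nu2
  have hps : (0:ℝ) < ∏ v ∈ (Finset.univ.filter fun u => (s, u) ∈ E ∨ (u, s) ∈ E).erase t,
      (M v s a) ^ (ρw v s) := Finset.prod_pos fun v _ => Real.rpow_pos_of_pos (hM v s a) _
  have hpt : (0:ℝ) < ∏ v ∈ (Finset.univ.filter fun u => (t, u) ∈ E ∨ (u, t) ∈ E).erase s,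
      (M v t b) ^ (ρw v t) := Finset.prod_pos fun v _ => Real.rpow_pos_of_pos (hM v t b) _
  have hqs : (0:ℝ) < (M t s a) ^ (1 - ρw t s) := Real.rpow_pos_of_pos (hM t s a) _
  have hqt : (0:ℝ) < (M s t b) ^ (1 - ρw s t) := Real.rpow_pos_of_pos (hM s t b) _
  rw [Real.log_mul (mul_pos (mul_pos (hc2 s t) (Real.exp_pos _)) (div_pos hps hqs)).ne'
      (div_pos hpt hqt).ne',
    Real.log_mul (mul_pos (hc2 s t) (Real.exp_pos _)).ne' (div_pos hps hqs).ne',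
    Real.log_mul (hc2 s t).ne' (Real.exp_ne_zero _), Real.log_exp,
    Real.log_div hps.ne' hqs.ne', Real.log_div hpt.ne' hqt.ne',
    Real.log_prod (fun v _ => (Real.rpow_pos_of_pos (hM v s a) _).ne'),
    Real.log_prod (fun v _ => (Real.rpow_pos_of_pos (hM v t b) _).ne'),
    Real.log_rpow (hM t s a), Real.log_rpow (hM s t b)]
  simp_rw [Real.log_rpow (hM _ s a), Real.log_rpow (hM _ t b)]

end Helpers

/-- Lemma 7: for any choice of strictly positive messages, the tree-structured
parameters defined by the pseudo-max-marginals form a ρ-reparameterization of the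
original distribution: if each edge weight `ρw` equals the probability that the edge
appears in a tree drawn from the distribution `ρ` over the trees `ET T ⊆ E`, then
`∑_T ρ(T) θ(T)(x) = ∑_s θ̄_s(x_s) + ∑_{(s,t) ∈ E} θ̄_{st}(x_s,x_t) + C` for a
constant `C` independent of `x` (all messages cancel). -/
theorem stmt_18 {V : Type*} [Fintype V] [DecidableEq V] {X : V → Type*}
    {𝕋 : Type*} [Fintype 𝕋]
    (E : Finset (V × V))
    (hE_ne : ∀ p ∈ E, p.1 ≠ p.2) (hE_orient : ∀ p ∈ E, (p.2, p.1) ∉ E)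
    (ρ : 𝕋 → ℝ) (hρ0 : ∀ T, 0 ≤ ρ T) (hρ1 : ∑ T, ρ T = 1)
    (ET : 𝕋 → Finset (V × V)) (hET : ∀ T, ET T ⊆ E)
    (ρw : V → V → ℝ) (hρw_symm : ∀ s t, ρw s t = ρw t s)
    (hρw_pos : ∀ p ∈ E, 0 < ρw p.1 p.2) (hρw_le : ∀ p ∈ E, ρw p.1 p.2 ≤ 1)
    (happear : ∀ p ∈ E,
      ρw p.1 p.2 = ∑ T ∈ Finset.univ.filter (fun T => p ∈ ET T), ρ T)
    (θN : (s : V) → X s → ℝ) (θE : (s t : V) → X s → X t → ℝ)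
    (M : (v s : V) → X s → ℝ) (hM : ∀ (v s : V) (a : X s), 0 < M v s a)
    (c1 : V → ℝ) (hc1 : ∀ s, 0 < c1 s)
    (c2 : V → V → ℝ) (hc2 : ∀ s t, 0 < c2 s t) :
    ∃ C : ℝ, ∀ x : (v : V) → X v,
      ∑ T, ρ T * thetaTree E θN θE ρw M c1 c2 (ET T) x =
        (∑ s, θN s (x s)) + (∑ p ∈ E, θE p.1 p.2 (x p.1) (x p.2)) + C := by
  classical
  refine ⟨(∑ s, Real.log (c1 s)) + ∑ p ∈ E, ρw p.1 p.2 *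
    (Real.log (c2 p.1 p.2) - Real.log (c1 p.1) - Real.log (c1 p.2)), fun x => ?_⟩
  set g : V × V → ℝ := fun p =>
    Real.log (nu2 E θN θE ρw M c2 p.1 p.2 (x p.1) (x p.2) /
      (nu1 E θN ρw M c1 p.1 (x p.1) * nu1 E θN ρw M c1 p.2 (x p.2))) with hg
  have hA : ∑ T, ρ T * thetaTree E θN θE ρw M c1 c2 (ET T) x
      = (∑ s, Real.log (nu1 E θN ρw M c1 s (x s))) + ∑ p ∈ E, ρw p.1 p.2 * g p := by
    unfold thetaTree
    simp_rw [mul_add]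
    rw [Finset.sum_add_distrib, ← Finset.sum_mul, hρ1, one_mul]
    congr 1
    have h1 : ∀ T, (∑ p ∈ ET T, g p) = ∑ p ∈ E, if p ∈ ET T then g p else 0 := by
      intro T
      rw [Finset.sum_ite_mem, Finset.inter_eq_right.mpr (hET T)]
    calc ∑ T, ρ T * ∑ p ∈ ET T, g p
        = ∑ T, ∑ p ∈ E, (if p ∈ ET T then ρ T * g p else 0) := by
          simp_rw [h1, Finset.mul_sum, mul_ite, mul_zero]
      _ = ∑ p ∈ E, ∑ T, (if p ∈ ET T then ρ T else 0) * g p := by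
          rw [Finset.sum_comm]
          refine Finset.sum_congr rfl fun p _ => Finset.sum_congr rfl fun T _ => ?_
          by_cases h : p ∈ ET T <;> simp [h]
      _ = ∑ p ∈ E, ρw p.1 p.2 * g p := by
          refine Finset.sum_congr rfl fun p hp => ?_
          rw [← Finset.sum_mul, ← Finset.sum_filter, ← happear p hp]
  have hB : ∀ p ∈ E, ρw p.1 p.2 * g p = θE p.1 p.2 (x p.1) (x p.2)
      + ρw p.1 p.2 * (Real.log (c2 p.1 p.2) - Real.log (c1 p.1) - Real.log (c1 p.2))
      - ρw p.1 p.2 * (Real.log (M p.2 p.1 (x p.1)) + Real.log (M p.1 p.2 (x p.2))) := by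
    rintro ⟨s, t⟩ hp
    have hne : ρw s t ≠ 0 := (hρw_pos _ hp).ne'
    have hts : t ∈ Finset.univ.filter (fun u => (s, u) ∈ E ∨ (u, s) ∈ E) := by
      simp only [Finset.mem_filter, Finset.mem_univ, true_and]
      exact Or.inl hp
    have hst : s ∈ Finset.univ.filter (fun u => (t, u) ∈ E ∨ (u, t) ∈ E) := by
      simp only [Finset.mem_filter, Finset.mem_univ, true_and]
      exact Or.inr hp
    have hval : g (s, t) = (Real.log (c2 s t) - Real.log (c1 s) - Real.log (c1 t))
        + θE s t (x s) (x t) / ρw s t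
        - Real.log (M t s (x s)) - Real.log (M s t (x t)) := by
      show Real.log _ = _
      rw [Real.log_div (nu2_pos E θN θE ρw M c2 hM hc2 s t (x s) (x t)).ne'
          (mul_pos (nu1_pos E θN ρw M c1 hM hc1 s (x s))
            (nu1_pos E θN ρw M c1 hM hc1 t (x t))).ne',
        Real.log_mul (nu1_pos E θN ρw M c1 hM hc1 s (x s)).ne'
          (nu1_pos E θN ρw M c1 hM hc1 t (x t)).ne',
        log_nu1 E θN ρw M c1 hM hc1 s (x s), log_nu1 E θN ρw M c1 hM hc1 t (x t),
        log_nu2 E θN θE ρw M c2 hM hc2 s t (x s) (x t)]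
      have e1 : (∑ v ∈ (Finset.univ.filter fun u => (s, u) ∈ E ∨ (u, s) ∈ E).erase t,
            ρw v s * Real.log (M v s (x s)))
          = (∑ v ∈ Finset.univ.filter (fun u => (s, u) ∈ E ∨ (u, s) ∈ E),
              ρw v s * Real.log (M v s (x s))) - ρw t s * Real.log (M t s (x s)) := by
        rw [← Finset.sum_erase_add _ _ hts]
        ring
      have e2 : (∑ v ∈ (Finset.univ.filter fun u => (t, u) ∈ E ∨ (u, t) ∈ E).erase s,
            ρw v t * Real.log (M v t (x t)))
          = (∑ v ∈ Finset.univ.filter (fun u => (t, u) ∈ E ∨ (u, t) ∈ E),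
              ρw v t * Real.log (M v t (x t))) - ρw s t * Real.log (M s t (x t)) := by
        rw [← Finset.sum_erase_add _ _ hst]
        ring
      rw [e1, e2]
      ring
    have hcancel : ρw s t * (θE s t (x s) (x t) / ρw s t) = θE s t (x s) (x t) := by
      field_simp
    rw [hval]
    linear_combination hcancel
  have hB' : ∑ p ∈ E, ρw p.1 p.2 * g p = ∑ p ∈ E, (θE p.1 p.2 (x p.1) (x p.2)
      + ρw p.1 p.2 * (Real.log (c2 p.1 p.2) - Real.log (c1 p.1) - Real.log (c1 p.2))
      - ρw p.1 p.2 * (Real.log (M p.2 p.1 (x p.1)) + Real.log (M p.1 p.2 (x p.2)))) :=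
    Finset.sum_congr rfl hB
  have hC : ∑ s, ∑ v ∈ Finset.univ.filter (fun u => (s, u) ∈ E ∨ (u, s) ∈ E),
        ρw v s * Real.log (M v s (x s))
      = ∑ p ∈ E, ρw p.1 p.2 *
        (Real.log (M p.2 p.1 (x p.1)) + Real.log (M p.1 p.2 (x p.2))) := by
    rw [pair_sum E hE_orient (fun v s => ρw v s * Real.log (M v s (x s)))]
    refine Finset.sum_congr rfl fun p _ => ?_
    rw [hρw_symm p.2 p.1]
    ring
  rw [hA, hB']
  simp_rw [log_nu1 E θN ρw M c1 hM hc1]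
  rw [Finset.sum_add_distrib, Finset.sum_add_distrib, hC, Finset.sum_sub_distrib,
    Finset.sum_add_distrib]
  ring
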